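/- arXiv:2112.12452 — 7 statements merged into one kernel-verified Lean document; each statement's English description precedes it below -/
import Mathlib

section
/- Let V be a (2s+2)-dimensional F_q-vector space and let R be a collection of q+1 pairwise complementary (s+1)-dimensional subspaces such that every 2-dimensional subspace meeting three members of R nontrivially meets all members of R nontrivially (a regulus). Let σ ∈ R, let r₁, …, r_k be linearly independent vectors of σ (1 ≤ k ≤ s+1), and for each i let t_i be the unique 2-dimensional transversal subspace through r_i (the one meeting every member of R nontrivially). Then T := span(t₁, …, t_k) has dimension 2k and T intersects every member of R in a subspace of dimension exactly k. -/
open Module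

private lemma one_dim_span {F V : Type*} [Field F] [AddCommGroup V] [Module F V]
    {W : Submodule F V} (h : finrank F W = 1) :
    ∃ x : V, x ≠ 0 ∧ x ∈ W ∧ W = Submodule.span F {x} := by
  obtain ⟨v, hv0, hall⟩ := finrank_eq_one_iff'.mp h
  refine ⟨(v : V), by simpa using hv0, v.2, le_antisymm ?_ ?_⟩
  · intro x hx
    obtain ⟨c, hc⟩ := hall ⟨x, hx⟩
    have hcx : c • (v : V) = x := congrArg Subtype.val hc
    rw [← hcx]
    exact Submodule.smul_mem _ _ (Submodule.mem_span_singleton_self _)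
  · rw [Submodule.span_le, Set.singleton_subset_iff]; exact v.2

private lemma aux_li {F V : Type*} [Field F] [AddCommGroup V] [Module F V]
    {σ σ' : Submodule F V} (hd : σ ⊓ σ' = ⊥) {k : ℕ} {r w : Fin k → V}
    (hr : ∀ i, r i ∈ σ) (hw : ∀ i, w i ∈ σ') (hli : LinearIndependent F r)
    (c : Fin k → F) : LinearIndependent F (fun i => r i + c i • w i) := by
  rw [linearIndependent_iff'] at hli ⊢
  intro t g hg i hi
  have key : (∑ j ∈ t, g j • r j) + (∑ j ∈ t, (g j * c j) • w j) = 0 := by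
    rw [← hg, ← Finset.sum_add_distrib]
    exact Finset.sum_congr rfl fun j _ => by rw [smul_add, smul_smul]
  have h1 : (∑ j ∈ t, g j • r j) ∈ σ :=
    Submodule.sum_mem _ fun j _ => Submodule.smul_mem _ _ (hr j)
  have h2 : (∑ j ∈ t, g j • r j) ∈ σ' := by
    have : (∑ j ∈ t, g j • r j) = -(∑ j ∈ t, (g j * c j) • w j) := by
      linear_combination (norm := module) key
    rw [this]
    exact Submodule.neg_mem _ (Submodule.sum_mem _ fun j _ =>
      Submodule.smul_mem _ _ (hw j))
  have h0 : (∑ j ∈ t, g j • r j) = 0 := by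
    have := hd ▸ Submodule.mem_inf.mpr ⟨h1, h2⟩
    simpa using this
  exact hli t g h0 i hi

private lemma aux_li_w {F V : Type*} [Field F] [AddCommGroup V] [Module F V]
    {σ σ'' : Submodule F V} (hd : σ ⊓ σ'' = ⊥) {k : ℕ} {r w : Fin k → V}
    (hr : ∀ i, r i ∈ σ) (hli : LinearIndependent F r)
    {b : Fin k → F} (hb : ∀ i, b i ≠ 0) (hv : ∀ i, r i + b i • w i ∈ σ'') :
    LinearIndependent F w := by
  rw [linearIndependent_iff'] at hli ⊢
  intro t g hg i hi
  set d : Fin k → F := fun j => g j * (b j)⁻¹ with hdd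
  have hdb : ∀ j, d j * b j = g j := fun j => by
    rw [hdd]; rw [mul_assoc, inv_mul_cancel₀ (hb j), mul_one]
  have key : (∑ j ∈ t, d j • (r j + b j • w j)) = ∑ j ∈ t, d j • r j := by
    have : ∀ j ∈ t, d j • (r j + b j • w j) = d j • r j + g j • w j := fun j _ => by
      rw [smul_add, smul_smul, hdb]
    rw [Finset.sum_congr rfl this, Finset.sum_add_distrib, hg, add_zero]
  have h1 : (∑ j ∈ t, d j • r j) ∈ σ'' := by
    rw [← key]
    exact Submodule.sum_mem _ fun j _ => Submodule.smul_mem _ _ (hv j)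
  have h2 : (∑ j ∈ t, d j • r j) ∈ σ :=
    Submodule.sum_mem _ fun j _ => Submodule.smul_mem _ _ (hr j)
  have h0 : (∑ j ∈ t, d j • r j) = 0 := by
    have := hd ▸ Submodule.mem_inf.mpr ⟨h2, h1⟩
    simpa using this
  have hd0 : d i = 0 := hli t d h0 i hi
  have := hdb i
  rw [hd0, zero_mul] at this
  exact this.symm

/-- Span-of-transversals lemma: given a regulus R in a (2s+2)-dimensional F_q-vector
space, k linearly independent vectors in a member of R with their transversal lines
t₁,…,t_k, the span T of the transversals has dimension 2k and meets every member of R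
in a subspace of dimension exactly k. -/
theorem stmt_7 {q s k : ℕ} {F V : Type*} [Field F] [Fintype F] (hq : Fintype.card F = q)
    [AddCommGroup V] [Module F V] [FiniteDimensional F V]
    (hV : finrank F V = 2 * s + 2)
    (R : Finset (Submodule F V)) (hR : R.card = q + 1)
    (hdim : ∀ σ ∈ R, finrank F σ = s + 1)
    (hdisj : ∀ σ ∈ R, ∀ σ' ∈ R, σ ≠ σ' → σ ⊓ σ' = ⊥)
    (hreg : ∀ L : Submodule F V, finrank F L = 2 →
      (∃ σ₁ ∈ R, ∃ σ₂ ∈ R, ∃ σ₃ ∈ R, σ₁ ≠ σ₂ ∧ σ₁ ≠ σ₃ ∧ σ₂ ≠ σ₃ ∧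
        L ⊓ σ₁ ≠ ⊥ ∧ L ⊓ σ₂ ≠ ⊥ ∧ L ⊓ σ₃ ≠ ⊥) →
      ∀ σ ∈ R, L ⊓ σ ≠ ⊥)
    (σ : Submodule F V) (hσ : σ ∈ R)
    (hk1 : 1 ≤ k) (hks : k ≤ s + 1)
    (r : Fin k → V) (hrσ : ∀ i, r i ∈ σ) (hli : LinearIndependent F r)
    (tl : Fin k → Submodule F V)
    (htl : ∀ i, finrank F (tl i) = 2)
    (hrtl : ∀ i, r i ∈ tl i)
    (htrans : ∀ i, ∀ σ' ∈ R, finrank F (tl i ⊓ σ' : Submodule F V) = 1) :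
    finrank F (⨆ i, tl i : Submodule F V) = 2 * k ∧
      ∀ σ' ∈ R, finrank F ((⨆ i, tl i) ⊓ σ' : Submodule F V) = k := by
  classical
  have hq2 : 2 ≤ q := hq ▸ Fintype.one_lt_card
  -- pick two further members σ' and σ'' of R
  have hcard : 1 < (R.erase σ).card := by
    have := Finset.card_erase_of_mem hσ; omega
  obtain ⟨σ', hσ'm, σ'', hσ''m, hne⟩ := Finset.one_lt_card.mp hcard
  have hσ'R : σ' ∈ R := Finset.mem_of_mem_erase hσ'm
  have hσ''R : σ'' ∈ R := Finset.mem_of_mem_erase hσ''m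
  have hσ'ne : σ' ≠ σ := Finset.ne_of_mem_erase hσ'm
  have hσ''ne : σ'' ≠ σ := Finset.ne_of_mem_erase hσ''m
  have hdσσ' : σ ⊓ σ' = ⊥ := hdisj σ hσ σ' hσ'R hσ'ne.symm
  have hdσσ'' : σ ⊓ σ'' = ⊥ := hdisj σ hσ σ'' hσ''R hσ''ne.symm
  have hdσ'σ'' : σ' ⊓ σ'' = ⊥ := hdisj σ' hσ'R σ'' hσ''R hne
  have hr0 : ∀ i, r i ≠ 0 := fun i => hli.ne_zero i
  -- w i spans tl i ⊓ σ'
  choose w hw0 hwm hwspan using fun i => one_dim_span (htrans i σ' hσ'R)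
  have hwtl : ∀ i, w i ∈ tl i := fun i => (Submodule.mem_inf.mp (hwm i)).1
  have hwσ' : ∀ i, w i ∈ σ' := fun i => (Submodule.mem_inf.mp (hwm i)).2
  -- tl i = span {r i, w i}
  have htleq : ∀ i, tl i = Submodule.span F {r i, w i} := by
    intro i
    have hpair : LinearIndependent F ![r i, w i] := by
      rw [LinearIndependent.pair_iff' (hr0 i)]
      intro a ha
      have h1 : w i ∈ σ := ha ▸ Submodule.smul_mem _ _ (hrσ i)
      have : w i ∈ σ ⊓ σ' := Submodule.mem_inf.mpr ⟨h1, hwσ' i⟩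
      rw [hdσσ'] at this
      exact hw0 i (by simpa using this)
    have hrange : Set.range ![r i, w i] = {r i, w i} := by
      ext x
      simp [Fin.exists_fin_two, or_comm]
    have hdim2 : finrank F (Submodule.span F ({r i, w i} : Set V)) = 2 := by
      rw [← hrange, finrank_span_eq_card hpair]
      simp
    have hle : Submodule.span F ({r i, w i} : Set V) ≤ tl i := by
      rw [Submodule.span_le]
      rintro x (rfl | rfl)
      · exact hrtl i
      · exact hwtl i
    exact (Submodule.eq_of_le_of_finrank_le hle (by rw [hdim2, htl i])).symm
  -- coefficients b i from σ''
  have hbex : ∀ i, ∃ b : F, b ≠ 0 ∧ r i + b • w i ∈ σ'' := by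
    intro i
    obtain ⟨v, hv0, hvm, -⟩ := one_dim_span (htrans i σ'' hσ''R)
    obtain ⟨hvtl, hvσ''⟩ := Submodule.mem_inf.mp hvm
    rw [htleq i] at hvtl
    obtain ⟨a, c, hac⟩ := Submodule.mem_span_pair.mp hvtl
    have ha0 : a ≠ 0 := by
      rintro rfl
      have h1 : v ∈ σ' := by
        rw [← hac, zero_smul, zero_add]
        exact Submodule.smul_mem _ _ (hwσ' i)
      have : v ∈ σ' ⊓ σ'' := Submodule.mem_inf.mpr ⟨h1, hvσ''⟩
      rw [hdσ'σ''] at this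
      exact hv0 (by simpa using this)
    refine ⟨a⁻¹ * c, ?_, ?_⟩
    · rintro hb0
      have hcz : c = 0 := by
        rcases mul_eq_zero.mp hb0 with h | h
        · exact absurd h (inv_ne_zero ha0)
        · exact h
      have h1 : v ∈ σ := by
        rw [← hac, hcz, zero_smul, add_zero]
        exact Submodule.smul_mem _ _ (hrσ i)
      have : v ∈ σ ⊓ σ'' := Submodule.mem_inf.mpr ⟨h1, hvσ''⟩
      rw [hdσσ''] at this
      exact hv0 (by simpa using this)
    · have : r i + (a⁻¹ * c) • w i = a⁻¹ • v := by
        rw [← hac, smul_add, smul_smul, smul_smul]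
        field_simp
        rw [one_smul]
      rw [this]
      exact Submodule.smul_mem _ _ hvσ''
  choose b hb0 hbm using hbex
  have hwli : LinearIndependent F w := aux_li_w hdσσ'' hrσ hli hb0 hbm
  -- the 2k vectors r, w are linearly independent
  have hdisjspan : Disjoint (Submodule.span F (Set.range r))
      (Submodule.span F (Set.range w)) := by
    have h1 : Submodule.span F (Set.range r) ≤ σ := by
      rw [Submodule.span_le]; rintro x ⟨i, rfl⟩; exact hrσ i
    have h2 : Submodule.span F (Set.range w) ≤ σ' := by
      rw [Submodule.span_le]; rintro x ⟨i, rfl⟩; exact hwσ' i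
    exact Disjoint.mono h1 h2 (disjoint_iff.mpr hdσσ')
  have hsumli : LinearIndependent F (Sum.elim r w) := hli.sum_type hwli hdisjspan
  set T := (⨆ i, tl i : Submodule F V) with hTdef
  have hTspan : T = Submodule.span F (Set.range (Sum.elim r w)) := by
    rw [Set.Sum.elim_range, Submodule.span_union, hTdef]
    have : ∀ i, tl i = Submodule.span F ({r i, w i} : Set V) := htleq
    calc (⨆ i, tl i : Submodule F V)
        = ⨆ i, Submodule.span F ({r i, w i} : Set V) := by
          exact iSup_congr htleq
      _ = Submodule.span F (⋃ i, ({r i, w i} : Set V)) := (Submodule.span_iUnion _).symm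
      _ = Submodule.span F (Set.range r ∪ Set.range w) := by
          congr 1
          ext x
          constructor
          · rintro ⟨S, ⟨i, rfl⟩, (rfl | rfl)⟩
            · exact Or.inl ⟨i, rfl⟩
            · exact Or.inr ⟨i, rfl⟩
          · rintro (⟨i, rfl⟩ | ⟨i, rfl⟩)
            · exact ⟨{r i, w i}, ⟨i, rfl⟩, Or.inl rfl⟩
            · exact ⟨{r i, w i}, ⟨i, rfl⟩, Or.inr rfl⟩
      _ = Submodule.span F (Set.range r) ⊔ Submodule.span F (Set.range w) :=
          Submodule.span_union _ _
  have hTdim : finrank F T = 2 * k := by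
    rw [hTspan, finrank_span_eq_card hsumli]
    simp [two_mul]
  refine ⟨hTdim, ?_⟩
  have htlT : ∀ i, tl i ≤ T := fun i => le_iSup tl i
  -- lower bound
  have lb : ∀ ρ ∈ R, k ≤ finrank F (T ⊓ ρ : Submodule F V) := by
    intro ρ hρ
    by_cases hρσ' : ρ = σ'
    · subst hρσ'
      have hsub : Submodule.span F (Set.range w) ≤ T ⊓ ρ := by
        rw [Submodule.span_le]
        rintro x ⟨i, rfl⟩
        exact Submodule.mem_inf.mpr ⟨htlT i (hwtl i), hwσ' i⟩
      have := Submodule.finrank_mono hsub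
      rwa [finrank_span_eq_card hwli, Fintype.card_fin] at this
    · have hcex : ∀ i, ∃ c : F, r i + c • w i ∈ T ⊓ ρ := by
        intro i
        by_cases hρσ : ρ = σ
        · subst hρσ
          exact ⟨0, by
            rw [zero_smul, add_zero]
            exact Submodule.mem_inf.mpr ⟨htlT i (hrtl i), hrσ i⟩⟩
        · obtain ⟨v, hv0, hvm, -⟩ := one_dim_span (htrans i ρ hρ)
          obtain ⟨hvtl, hvρ⟩ := Submodule.mem_inf.mp hvm
          have hvtl' := hvtl
          rw [htleq i] at hvtl'
          obtain ⟨a, c, hac⟩ := Submodule.mem_span_pair.mp hvtl'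
          have hdρσ' : σ' ⊓ ρ = ⊥ := hdisj σ' hσ'R ρ hρ (fun h => hρσ' h.symm)
          have hdρσ : σ ⊓ ρ = ⊥ := hdisj σ hσ ρ hρ (fun h => hρσ h.symm)
          have ha0 : a ≠ 0 := by
            rintro rfl
            have h1 : v ∈ σ' := by
              rw [← hac, zero_smul, zero_add]
              exact Submodule.smul_mem _ _ (hwσ' i)
            have : v ∈ σ' ⊓ ρ := Submodule.mem_inf.mpr ⟨h1, hvρ⟩
            rw [hdρσ'] at this
            exact hv0 (by simpa using this)
          refine ⟨a⁻¹ * c, ?_⟩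
          have heq : r i + (a⁻¹ * c) • w i = a⁻¹ • v := by
            rw [← hac, smul_add, smul_smul, smul_smul]
            field_simp
            rw [one_smul]
          rw [heq]
          exact Submodule.mem_inf.mpr
            ⟨Submodule.smul_mem _ _ (htlT i hvtl), Submodule.smul_mem _ _ hvρ⟩
      choose c hc using hcex
      have hyli : LinearIndependent F (fun i => r i + c i • w i) :=
        aux_li hdσσ' hrσ hwσ' hli c
      have hsub : Submodule.span F (Set.range fun i => r i + c i • w i) ≤ T ⊓ ρ := by
        rw [Submodule.span_le]
        rintro x ⟨i, rfl⟩
        exact hc i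
      have := Submodule.finrank_mono hsub
      rwa [finrank_span_eq_card hyli, Fintype.card_fin] at this
  -- conclusion
  intro ρ hρ
  obtain ⟨τ, hτR, hτne⟩ : ∃ τ ∈ R, τ ≠ ρ := by
    by_cases h : ρ = σ
    · exact ⟨σ', hσ'R, h ▸ hσ'ne⟩
    · exact ⟨σ, hσ, fun hh => h hh.symm⟩
  have hinf : (T ⊓ ρ) ⊓ (T ⊓ τ) = ⊥ := by
    rw [← le_bot_iff, ← hdisj ρ hρ τ hτR hτne.symm]
    exact le_inf (inf_le_left.trans inf_le_right) (inf_le_right.trans inf_le_right)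
  have hsum := Submodule.finrank_sup_add_finrank_inf_eq (T ⊓ ρ) (T ⊓ τ)
  rw [hinf, finrank_bot] at hsum
  have hsup : finrank F ((T ⊓ ρ) ⊔ (T ⊓ τ) : Submodule F V) ≤ 2 * k := by
    have hle : (T ⊓ ρ) ⊔ (T ⊓ τ) ≤ T := sup_le inf_le_left inf_le_left
    have := Submodule.finrank_mono hle
    omega
  have h1 := lb ρ hρ
  have h2 := lb τ hτR
  omega
end

section
/- Let V be a (2s+2)-dimensional F_q-vector space with a regulus R (set of q+1 pairwise complementary (s+1)-dimensional subspaces such that any 2-dimensional subspace meeting three members meets all). Then there exists a 2s-dimensional subspace T of V that intersects every member of R in a subspace of dimension exactly s. -/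
open Module

/-- For any regulus R in a (2s+2)-dimensional F_q-vector space there exists a
2s-dimensional subspace intersecting every member of R in a subspace of dimension
exactly s. -/
theorem stmt_9 {q s : ℕ} {F V : Type*} [Field F] [Fintype F] (hq : Fintype.card F = q)
    [AddCommGroup V] [Module F V] [FiniteDimensional F V]
    (hV : finrank F V = 2 * s + 2)
    (R : Finset (Submodule F V)) (hR : R.card = q + 1)
    (hdim : ∀ σ ∈ R, finrank F σ = s + 1)
    (hdisj : ∀ σ ∈ R, ∀ σ' ∈ R, σ ≠ σ' → σ ⊓ σ' = ⊥)
    (hreg : ∀ L : Submodule F V, finrank F L = 2 →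
      (∃ σ₁ ∈ R, ∃ σ₂ ∈ R, ∃ σ₃ ∈ R, σ₁ ≠ σ₂ ∧ σ₁ ≠ σ₃ ∧ σ₂ ≠ σ₃ ∧
        L ⊓ σ₁ ≠ ⊥ ∧ L ⊓ σ₂ ≠ ⊥ ∧ L ⊓ σ₃ ≠ ⊥) →
      ∀ σ ∈ R, L ⊓ σ ≠ ⊥) :
    ∃ T : Submodule F V, finrank F T = 2 * s ∧
      ∀ σ ∈ R, finrank F (T ⊓ σ : Submodule F V) = s := by
  classical
  have hq2 : 2 ≤ q := by rw [← hq]; exact Fintype.one_lt_card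
  obtain ⟨t, htR, ht3⟩ := R.exists_subset_card_eq (show 3 ≤ R.card by omega)
  rw [Finset.card_eq_three] at ht3
  obtain ⟨σ₁, σ₂, σ₃, h12, h13, h23, rfl⟩ := ht3
  have hσ₁ : σ₁ ∈ R := htR (by simp)
  have hσ₂ : σ₂ ∈ R := htR (by simp)
  have hσ₃ : σ₃ ∈ R := htR (by simp)
  -- σ₁ and σ₂ are complementary
  have hc : IsCompl σ₁ σ₂ := by
    refine IsCompl.of_eq (hdisj _ hσ₁ _ hσ₂ h12) ?_
    apply Submodule.eq_top_of_finrank_eq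
    have h := Submodule.finrank_sup_add_finrank_inf_eq σ₁ σ₂
    rw [hdisj _ hσ₁ _ hσ₂ h12, finrank_bot, hdim _ hσ₁, hdim _ hσ₂] at h
    rw [hV]; omega
  set p₁ := σ₁.projectionOnto σ₂ hc with hp₁
  set p₂ := σ₂.projectionOnto σ₁ hc.symm with hp₂
  -- take s linearly independent vectors in σ₃
  have hσ₃dim : finrank F σ₃ = s + 1 := hdim _ hσ₃
  set b := Module.finBasis F σ₃ with hb
  have hembdom : ∀ i : Fin s, (i : ℕ) < finrank F σ₃ := by
    intro i; rw [hσ₃dim]; omega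
  set emb : Fin s → Fin (finrank F σ₃) := fun i => ⟨i.1, hembdom i⟩ with hemb
  have hembinj : Function.Injective emb := by
    intro i j h
    exact Fin.ext (by simpa [hemb] using congrArg Fin.val h)
  set d : Fin s → V := fun i => (b (emb i) : V) with hd
  have hd_mem : ∀ i, d i ∈ σ₃ := fun i => (b (emb i)).2
  have hd_li : LinearIndependent F d := by
    have h1 : LinearIndependent F (fun i => (b i : V)) :=
      b.linearIndependent.map' σ₃.subtype σ₃.ker_subtype
    exact h1.comp emb hembinj
  have hd_span : Submodule.span F (Set.range d) ≤ σ₃ :=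
    Submodule.span_le.2 (by rintro _ ⟨i, rfl⟩; exact hd_mem i)
  set x : Fin s → V := fun i => (p₁ (d i) : V) with hx
  set y : Fin s → V := fun i => (p₂ (d i) : V) with hy
  have hxy : ∀ i, x i + y i = d i := fun i =>
    Submodule.projection_add_projection_eq_self hc (d i)
  have hx_mem : ∀ i, x i ∈ σ₁ := fun i => (p₁ (d i)).2
  have hy_mem : ∀ i, y i ∈ σ₂ := fun i => (p₂ (d i)).2
  have hx_li : LinearIndependent F x := by
    have hker : LinearMap.ker (σ₁.subtype ∘ₗ p₁) = σ₂ := by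
      rw [LinearMap.ker_comp, Submodule.ker_subtype, Submodule.comap_bot,
        Submodule.ker_projectionOnto]
    have hdisj' : Disjoint (Submodule.span F (Set.range d)) (LinearMap.ker (σ₁.subtype ∘ₗ p₁)) := by
      rw [hker]
      exact Disjoint.mono_left hd_span (disjoint_iff.2 (hdisj _ hσ₃ _ hσ₂ (Ne.symm h23)))
    have h2 : LinearIndependent F ((σ₁.subtype ∘ₗ p₁) ∘ d) := hd_li.map hdisj'
    have hxe : x = (σ₁.subtype ∘ₗ p₁) ∘ d := by funext i; simp [hx, Function.comp]
    rw [hxe]; exact h2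
  have hy_li : LinearIndependent F y := by
    have hker : LinearMap.ker (σ₂.subtype ∘ₗ p₂) = σ₁ := by
      rw [LinearMap.ker_comp, Submodule.ker_subtype, Submodule.comap_bot,
        Submodule.ker_projectionOnto]
    have hdisj' : Disjoint (Submodule.span F (Set.range d)) (LinearMap.ker (σ₂.subtype ∘ₗ p₂)) := by
      rw [hker]
      exact Disjoint.mono_left hd_span (disjoint_iff.2 (hdisj _ hσ₃ _ hσ₁ (Ne.symm h13)))
    have h2 : LinearIndependent F ((σ₂.subtype ∘ₗ p₂) ∘ d) := hd_li.map hdisj'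
    have hye : y = (σ₂.subtype ∘ₗ p₂) ∘ d := by funext i; simp [hy, Function.comp]
    rw [hye]; exact h2
  have hx_span : Submodule.span F (Set.range x) ≤ σ₁ :=
    Submodule.span_le.2 (by rintro _ ⟨i, rfl⟩; exact hx_mem i)
  have hy_span : Submodule.span F (Set.range y) ≤ σ₂ :=
    Submodule.span_le.2 (by rintro _ ⟨i, rfl⟩; exact hy_mem i)
  set c : Fin s ⊕ Fin s → V := Sum.elim x y with hcdef
  have hc_li : LinearIndependent F c :=
    hx_li.sum_type hy_li
      (Disjoint.mono hx_span hy_span (disjoint_iff.2 (hdisj _ hσ₁ _ hσ₂ h12)))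
  set T := Submodule.span F (Set.range c) with hT
  have hTdim : finrank F T = 2 * s := by
    rw [finrank_span_eq_card hc_li]
    simp [two_mul]
  -- the transversal lines
  have hLdim : ∀ i : Fin s, finrank F (Submodule.span F {x i, y i}) = 2 := by
    intro i
    have hpair : LinearIndependent F ![x i, y i] := by
      have hginj : Function.Injective ![Sum.inl i, Sum.inr i] := by
        intro a b hab
        fin_cases a <;> fin_cases b
        · rfl
        · exact absurd hab (by simp)
        · exact absurd hab (by simp)
        · rfl
      have := hc_li.comp ![Sum.inl i, Sum.inr i] hginj
      have hcomp : c ∘ ![Sum.inl i, Sum.inr i] = ![x i, y i] := by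
        funext j; fin_cases j <;> rfl
      rwa [hcomp] at this
    have hset : ({x i, y i} : Set V) = Set.range ![x i, y i] := by
      simp [Matrix.range_cons, Matrix.range_empty, Set.pair_comm]
    rw [hset, finrank_span_eq_card hpair]
    simp
  have hxmemL : ∀ i : Fin s, x i ∈ Submodule.span F {x i, y i} := fun i =>
    Submodule.subset_span (Set.mem_insert _ _)
  have hymemL : ∀ i : Fin s, y i ∈ Submodule.span F {x i, y i} := fun i =>
    Submodule.subset_span (by simp)
  have hdmemL : ∀ i : Fin s, d i ∈ Submodule.span F {x i, y i} := by
    intro i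
    rw [← hxy i]
    exact add_mem (hxmemL i) (hymemL i)
  have hL : ∀ i : Fin s, ∀ σ ∈ R, Submodule.span F {x i, y i} ⊓ σ ≠ ⊥ := by
    intro i σ hσ
    refine hreg _ (hLdim i) ⟨σ₁, hσ₁, σ₂, hσ₂, σ₃, hσ₃, h12, h13, h23, ?_, ?_, ?_⟩ σ hσ
    · exact Submodule.ne_bot_iff _ |>.2
        ⟨x i, Submodule.mem_inf.2 ⟨hxmemL i, hx_mem i⟩, hx_li.ne_zero i⟩
    · exact Submodule.ne_bot_iff _ |>.2
        ⟨y i, Submodule.mem_inf.2 ⟨hymemL i, hy_mem i⟩, hy_li.ne_zero i⟩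
    · exact Submodule.ne_bot_iff _ |>.2
        ⟨d i, Submodule.mem_inf.2 ⟨hdmemL i, hd_mem i⟩, hd_li.ne_zero i⟩
  have hLT : ∀ i : Fin s, Submodule.span F {x i, y i} ≤ T := by
    intro i
    apply Submodule.span_le.2
    rintro v hv
    rcases hv with rfl | hv
    · exact Submodule.subset_span ⟨Sum.inl i, rfl⟩
    · rcases hv with rfl
      exact Submodule.subset_span ⟨Sum.inr i, rfl⟩
  -- lower bound
  have hlow : ∀ σ ∈ R, s ≤ finrank F (T ⊓ σ : Submodule F V) := by
    intro σ hσ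
    have hw : ∀ i : Fin s, ∃ w : V, w ∈ Submodule.span F {x i, y i} ⊓ σ ∧ w ≠ 0 := by
      intro i
      rcases (Submodule.ne_bot_iff _).1 (hL i σ hσ) with ⟨w, hw, hw0⟩
      exact ⟨w, hw, hw0⟩
    choose w hw_mem hw0 using hw
    have hw_span : ∀ i, w i ∈ Submodule.span F {x i, y i} := fun i =>
      (Submodule.mem_inf.1 (hw_mem i)).1
    have hcoef : ∀ i, ∃ a bb : F, a • x i + bb • y i = w i := fun i =>
      Submodule.mem_span_pair.1 (hw_span i)
    choose aa bb hab using hcoef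
    have hw_li : LinearIndependent F w := by
      rw [Fintype.linearIndependent_iff]
      intro co hco i
      have key := Fintype.linearIndependent_iff.1 hc_li
        (Sum.elim (fun j => co j * aa j) (fun j => co j * bb j)) ?_
      · have h1 := key (Sum.inl i)
        have h2 := key (Sum.inr i)
        simp only [Sum.elim_inl, Sum.elim_inr] at h1 h2
        by_contra hne
        have ha0 : aa i = 0 := by
          rcases mul_eq_zero.1 h1 with h | h
          · exact absurd h hne
          · exact h
        have hb0 : bb i = 0 := by
          rcases mul_eq_zero.1 h2 with h | h
          · exact absurd h hne
          · exact h
        apply hw0 i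
        rw [← hab i, ha0, hb0, zero_smul, zero_smul, add_zero]
      · rw [Fintype.sum_sum_type]
        simp only [Sum.elim_inl, Sum.elim_inr, hcdef]
        rw [← Finset.sum_add_distrib]
        rw [← hco]
        apply Finset.sum_congr rfl
        intro j _
        rw [mul_smul, mul_smul, ← smul_add, hab j]
    have hw_memT : ∀ i, w i ∈ T ⊓ σ := fun i =>
      Submodule.mem_inf.2 ⟨hLT i (hw_span i), (Submodule.mem_inf.1 (hw_mem i)).2⟩
    set w' : Fin s → (T ⊓ σ : Submodule F V) := fun i => ⟨w i, hw_memT i⟩ with hw'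
    have hw'_li : LinearIndependent F w' :=
      LinearIndependent.of_comp (T ⊓ σ : Submodule F V).subtype hw_li
    simpa using hw'_li.fintype_card_le_finrank
  refine ⟨T, hTdim, fun σ hσ => ?_⟩
  refine le_antisymm ?_ (hlow σ hσ)
  by_contra hgt
  push_neg at hgt
  have hσT : σ ≤ T := by
    have hle : T ⊓ σ ≤ σ := inf_le_right
    have heq : T ⊓ σ = σ := Submodule.eq_of_le_of_finrank_le hle (by rw [hdim σ hσ]; omega)
    rw [← heq]
    exact inf_le_left
  obtain ⟨σ', hσ', hne⟩ : ∃ σ' ∈ R, σ' ≠ σ := by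
    by_cases h : σ = σ₁
    · exact ⟨σ₂, hσ₂, by rw [h]; exact Ne.symm h12⟩
    · exact ⟨σ₁, hσ₁, fun hh => h (hh ▸ rfl)⟩
  have hbot : σ ⊓ (T ⊓ σ') = ⊥ := by
    rw [← le_bot_iff, ← hdisj σ hσ σ' hσ' (Ne.symm hne)]
    exact inf_le_inf le_rfl inf_le_right
  have hsum := Submodule.finrank_sup_add_finrank_inf_eq σ (T ⊓ σ')
  rw [hbot, finrank_bot, hdim σ hσ] at hsum
  have hle2 : σ ⊔ (T ⊓ σ') ≤ T := sup_le hσT inf_le_left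
  have hm := Submodule.finrank_mono hle2
  have h2 := hlow σ' hσ'
  omega
end

section
/- Let V be an F_{q^{s+1}}-vector space of dimension t (t ≥ 1), viewed also as an F_q-vector space of dimension t(s+1). Let C be the set of 1-dimensional F_{q^{s+1}}-subspaces of V spanned by nonzero vectors of the F_q-span of an F_{q^{s+1}}-basis of V (i.e., C is the point set of a (t-1)-dimensional F_q-subgeometry of PG(t-1,q^{s+1})). Then there exists an F_q-subspace χ of V of F_q-dimension st such that for every P ∈ C, the F_q-dimension of χ ∩ P (where P is viewed as an (s+1)-dimensional F_q-subspace) equals exactly s. -/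
open Module

/-- The submodule `Submodule.pi Set.univ p` is linearly equivalent to the pi type `Π i, p i`. -/
def piUnivSubmoduleEquiv {R ι : Type*} [Semiring R] {φ : ι → Type*}
    [∀ i, AddCommMonoid (φ i)] [∀ i, Module R (φ i)] (p : ∀ i, Submodule R (φ i)) :
    (Submodule.pi Set.univ p) ≃ₗ[R] Π i, p i where
  toFun x := fun i => ⟨x.1 i, x.2 i trivial⟩
  map_add' x y := rfl
  map_smul' r x := rfl
  invFun f := ⟨fun i => f i, fun i _ => (f i).2⟩
  left_inv x := rfl
  right_inv f := rfl

/-- Key lemma (Lemma 3.4): for the point set of a (t-1)-dimensional F_q-subgeometry of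
PG(t-1,q^{s+1}), given by the F_{q^{s+1}}-spans of nonzero vectors of a t-dimensional
F_q-subspace W spanning V over F_{q^{s+1}}, there is an F_q-subspace χ of F_q-dimension
st meeting each field-reduced point in an F_q-subspace of dimension exactly s. -/
theorem stmt_10 {q s t : ℕ} {K L V : Type*} [Field K] [Fintype K] (hq : Fintype.card K = q)
    [Field L] [Algebra K L] (hd : finrank K L = s + 1)
    [AddCommGroup V] [Module L V] [Module K V] [IsScalarTower K L V]
    [FiniteDimensional L V] (hV : finrank L V = t) (ht : 1 ≤ t)
    (W : Submodule K V) (hW : finrank K W = t)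
    (hWspan : Submodule.span L (W : Set V) = ⊤) :
    ∃ χ : Submodule K V, finrank K χ = s * t ∧
      ∀ w ∈ W, w ≠ 0 →
        finrank K (χ ⊓ (Submodule.span L {w}).restrictScalars K : Submodule K V) = s := by
  classical
  have hfdL : FiniteDimensional K L := FiniteDimensional.of_finrank_pos (by omega)
  have hfdW : FiniteDimensional K W := FiniteDimensional.of_finrank_pos (by omega)
  -- a K-linear functional on L with kernel of dimension s
  let c : Basis (Fin (s + 1)) K L := (finBasis K L).reindex (finCongr hd)
  let φ : L →ₗ[K] K := c.coord 0
  have hφc : φ (c 0) = 1 := by simp [φ, Basis.coord_apply]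
  have hsurj : Function.Surjective φ := fun z => ⟨z • c 0, by simp [map_smul, hφc]⟩
  have hker : finrank K (LinearMap.ker φ) = s := by
    have h1 := LinearMap.finrank_range_add_finrank_ker φ
    rw [LinearMap.range_eq_top.mpr hsurj, finrank_top, finrank_self, hd] at h1
    omega
  -- a K-basis of W which is an L-basis of V
  let b : Basis (Fin t) K W := (finBasis K W).reindex (finCongr hW)
  let v : Fin t → V := fun i => (b i : V)
  have hWv : W = Submodule.span K (Set.range v) := by
    have hb := b.span_eq
    have := congrArg (Submodule.map W.subtype) hb
    rw [Submodule.map_span, Submodule.map_subtype_top, ← Set.range_comp] at this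
    exact this.symm
  have hle : ⊤ ≤ Submodule.span L (Set.range v) := by
    rw [← hWspan, Submodule.span_le]
    intro x hx
    have : x ∈ Submodule.span K (Set.range v) := hWv ▸ hx
    exact Submodule.span_subset_span K L _ this
  have hcard : Fintype.card (Fin t) = finrank L V := by simp [hV]
  let B : Basis (Fin t) L V := basisOfTopLeSpanOfCardEqFinrank v hle hcard
  have hB : ⇑B = v := coe_basisOfTopLeSpanOfCardEqFinrank v hle hcard
  -- the subspace χ
  let e : V ≃ₗ[K] (Fin t → L) := B.equivFun.restrictScalars K
  let P : Submodule K (Fin t → L) := Submodule.pi Set.univ fun _ => LinearMap.ker φ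
  refine ⟨Submodule.comap (e : V →ₗ[K] Fin t → L) P, ?_, ?_⟩
  · have h1 : Submodule.comap (e : V →ₗ[K] Fin t → L) P = Submodule.map (e.symm : (Fin t → L) →ₗ[K] V) P :=
      (Submodule.map_equiv_eq_comap_symm e.symm P).symm
    rw [h1]
    have h2 : finrank K P = s * t := by
      rw [(piUnivSubmoduleEquiv _).finrank_eq, finrank_pi_fintype,
        Finset.sum_congr rfl (fun i _ => hker)]
      simp [mul_comm]
    rw [← h2]
    exact (e.symm.submoduleMap P).symm.finrank_eq
  · intro w hw hw0
    set w0 : W := ⟨w, hw⟩ with hw0def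
    set cc : Fin t → K := fun i => b.repr w0 i with hcc
    have hwsum : w = ∑ i, cc i • v i := by
      have h := b.sum_repr w0
      have := congrArg (W.subtype) h
      simp only [map_sum, map_smul, Submodule.subtype_apply] at this
      exact this.symm
    have hEw : B.equivFun w = fun i => algebraMap K L (cc i) := by
      have hsymm : B.equivFun.symm (fun i => algebraMap K L (cc i)) = w := by
        rw [Module.Basis.equivFun_symm_apply]
        rw [hwsum]
        exact Finset.sum_congr rfl fun i _ => by rw [hB, algebraMap_smul]
      rw [← hsymm, LinearEquiv.apply_symm_apply]
    obtain ⟨i0, hi0⟩ : ∃ i, cc i ≠ 0 := by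
      by_contra h
      push_neg at h
      have : w0 = 0 := by
        have : b.repr w0 = 0 := Finsupp.ext fun i => h i
        simpa using congrArg b.repr.symm this
      exact hw0 (by simpa [hw0def] using congrArg (Subtype.val) this)
    -- φ applied to coordinates of a • w
    have key : ∀ a : L, (∀ i, φ (a * algebraMap K L (cc i)) = 0) ↔ φ a = 0 := by
      intro a
      constructor
      · intro h
        have := h i0
        rw [mul_comm, ← Algebra.smul_def, map_smul, smul_eq_mul] at this
        exact (mul_eq_zero.mp this).resolve_left hi0
      · intro h i
        rw [mul_comm, ← Algebra.smul_def, map_smul, smul_eq_mul, h, mul_zero]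
    let f : L →ₗ[K] V := (LinearMap.toSpanSingleton L V w).restrictScalars K
    have hfinj : Function.Injective f := by
      intro a a' h
      have h2 : (a - a') • w = 0 := by
        have : a • w - a' • w = 0 := by
          simpa [f, LinearMap.toSpanSingleton, sub_eq_zero] using h
        rwa [sub_smul]
      rcases smul_eq_zero.mp h2 with h3 | h3
      · exact sub_eq_zero.mp h3
      · exact absurd h3 hw0
    have hset : (Submodule.comap (e : V →ₗ[K] Fin t → L) P ⊓
        (Submodule.span L {w}).restrictScalars K : Submodule K V)
        = Submodule.map f (LinearMap.ker φ) := by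
      ext x
      simp only [Submodule.mem_inf, Submodule.mem_comap, Submodule.restrictScalars_mem,
        Submodule.mem_map, LinearMap.mem_ker]
      constructor
      · rintro ⟨hx1, hx2⟩
        obtain ⟨a, rfl⟩ := Submodule.mem_span_singleton.mp hx2
        refine ⟨a, ?_, rfl⟩
        have hco : ∀ i, φ ((e : V →ₗ[K] Fin t → L) (a • w) i) = 0 := fun i =>
          hx1 i trivial
        have he : (e : V →ₗ[K] Fin t → L) (a • w) = fun i => a * algebraMap K L (cc i) := by
          show B.equivFun (a • w) = _
          rw [map_smul, hEw]
          rfl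
        rw [he] at hco
        exact (key a).mp hco
      · rintro ⟨a, ha, rfl⟩
        constructor
        · intro i _
          have he : (e : V →ₗ[K] Fin t → L) (f a) = fun i => a * algebraMap K L (cc i) := by
            show B.equivFun (a • w) = _
            rw [map_smul, hEw]
            rfl
          show φ ((e : V →ₗ[K] Fin t → L) (f a) i) = 0
          rw [he]
          exact (key a).mpr ha i
        · exact Submodule.smul_mem _ a (Submodule.mem_span_singleton_self w)
    rw [hset, ← hker]
    exact ((Submodule.equivMapOfInjective f hfinj (LinearMap.ker φ)).symm.finrank_eq)
end

section
/- Let V be a 2-dimensional F_{q^{s+1}}-vector space and let W be a 2-dimensional F_q-subspace of V with F_{q^{s+1}}-span equal to V (so the F_{q^{s+1}}-lines spanned by nonzero vectors of W form an F_q-subline of PG(1,q^{s+1})). Then the set R of 1-dimensional F_{q^{s+1}}-subspaces spanned by nonzero vectors of W has exactly q+1 elements, and, viewing each element as an (s+1)-dimensional F_q-subspace of the 2(s+1)-dimensional F_q-vector space V, these are pairwise disjoint and form a regulus: every 2-dimensional F_q-subspace of V meeting three members of R nontrivially meets all members of R nontrivially. -/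
open Module

section Aux

variable {K L V : Type*} [Field K] [Field L] [Algebra K L]
  [AddCommGroup V] [Module L V] [Module K V] [IsScalarTower K L V]

/-- K-scaling does not change the L-span of a singleton. -/
lemma span_singleton_ksmul (a : K) (ha : a ≠ 0) (v : V) :
    Submodule.span L {a • v} = Submodule.span L {v} := by
  have h : (a • v : V) = algebraMap K L a • v := (algebraMap_smul L a v).symm
  rw [h]
  have hu : IsUnit (algebraMap K L a) :=
    isUnit_iff_ne_zero.mpr fun h0 => ha ((algebraMap K L).injective (by rw [h0, map_zero]))
  exact Submodule.span_singleton_smul_eq hu v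

/-- L-scaling does not change the L-span of a singleton. -/
lemma span_singleton_lsmul (μ : L) (hμ : μ ≠ 0) (v : V) :
    Submodule.span L {μ • v} = Submodule.span L {v} :=
  Submodule.span_singleton_smul_eq (isUnit_iff_ne_zero.mpr hμ) v

/-- Rearranging an equality of pair combinations. -/
lemma pair_sub_eq_zero {R M : Type*} [Ring R] [AddCommGroup M] [Module R M]
    {A B C D : R} {x y : M} (h : A • x + B • y = C • x + D • y) :
    (A - C) • x + (B - D) • y = 0 := by
  rw [sub_smul, sub_smul]
  calc A • x - C • x + (B • y - D • y) = (A • x + B • y) - (C • x + D • y) := by abel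
    _ = 0 := by rw [h, sub_self]

end Aux

/-- Field reduction maps an F_q-subline of PG(1,q^{s+1}) to a regulus of PG(2s+1,q):
the set R of F_{q^{s+1}}-lines spanned by nonzero vectors of a 2-dimensional
F_q-subspace W spanning V has q+1 elements, its members (restricted to F_q) are pairwise
disjoint (s+1)-dimensional F_q-subspaces, and every 2-dimensional F_q-subspace meeting
three members of R nontrivially meets all members of R nontrivially. -/
theorem stmt_11 {q s : ℕ} {K L V : Type*} [Field K] [Fintype K] (hq : Fintype.card K = q)
    [Field L] [Algebra K L] (hd : finrank K L = s + 1)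
    [AddCommGroup V] [Module L V] [Module K V] [IsScalarTower K L V]
    [FiniteDimensional L V] (hV : finrank L V = 2)
    (W : Submodule K V) (hW : finrank K W = 2)
    (hWspan : Submodule.span L (W : Set V) = ⊤)
    (R : Set (Submodule L V))
    (hRdef : R = {P | ∃ w ∈ W, w ≠ 0 ∧ P = Submodule.span L {w}}) :
    Nat.card R = q + 1 ∧
    (∀ P ∈ R, finrank K (Submodule.restrictScalars K P) = s + 1) ∧
    (∀ P₁ ∈ R, ∀ P₂ ∈ R, P₁ ≠ P₂ →
      Submodule.restrictScalars K P₁ ⊓ Submodule.restrictScalars K P₂ = ⊥) ∧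
    (∀ M : Submodule K V, finrank K M = 2 →
      (∃ P₁ ∈ R, ∃ P₂ ∈ R, ∃ P₃ ∈ R, P₁ ≠ P₂ ∧ P₁ ≠ P₃ ∧ P₂ ≠ P₃ ∧
        M ⊓ Submodule.restrictScalars K P₁ ≠ ⊥ ∧
        M ⊓ Submodule.restrictScalars K P₂ ≠ ⊥ ∧
        M ⊓ Submodule.restrictScalars K P₃ ≠ ⊥) →
      ∀ P ∈ R, M ⊓ Submodule.restrictScalars K P ≠ ⊥) := by
  subst hRdef
  have hKL : FiniteDimensional K L :=
    FiniteDimensional.of_finrank_pos (by rw [hd]; exact Nat.succ_pos s)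
  have hKV : FiniteDimensional K V := FiniteDimensional.trans K L V
  have halg : Function.Injective (algebraMap K L) := (algebraMap K L).injective
  -- Key structural fact: a K-independent pair in W spans W over K and is L-independent.
  have key : ∀ x y : V, x ∈ W → y ∈ W → LinearIndependent K ![x, y] →
      W = Submodule.span K {x, y} ∧ LinearIndependent L ![x, y] := by
    intro x y hx hy hxy
    have hrange : Set.range ![x, y] = {x, y} := by
      ext z; simp [Fin.exists_fin_two]; tauto
    have hspanW : Submodule.span K {x, y} = W := by
      have hle : Submodule.span K {x, y} ≤ W := by
        rw [Submodule.span_le]; rintro z hz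
        rcases hz with rfl | hz
        · exact hx
        · rcases hz with rfl; exact hy
      have hfr : finrank K (Submodule.span K ({x, y} : Set V)) = 2 := by
        rw [← hrange, finrank_span_eq_card hxy]; simp
      exact Submodule.eq_of_le_of_finrank_le hle (by rw [hfr, hW])
    have hspanL : Submodule.span L ({x, y} : Set V) = ⊤ := by
      rw [← top_le_iff, ← hWspan, Submodule.span_le]
      intro w hw
      have hw' : w ∈ Submodule.span K ({x, y} : Set V) := by rw [hspanW]; exact hw
      have hle2 : Submodule.span K ({x, y} : Set V) ≤
          Submodule.restrictScalars K (Submodule.span L ({x, y} : Set V)) := by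
        rw [Submodule.span_le]; exact Submodule.subset_span
      exact hle2 hw'
    refine ⟨hspanW.symm, ?_⟩
    have hcard : Fintype.card (Fin 2) = finrank L V := by simp [hV]
    have hli := (basisOfTopLeSpanOfCardEqFinrank ![x, y]
      (by rw [hrange, hspanL]) hcard).linearIndependent
    rwa [coe_basisOfTopLeSpanOfCardEqFinrank] at hli
  -- K-independence of a pair of nonzero vectors of W spanning distinct L-lines
  have indep_of_ne : ∀ x y : V, x ≠ 0 → y ≠ 0 →
      Submodule.span L {x} ≠ Submodule.span L {y} → LinearIndependent K ![x, y] := by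
    intro x y hx0 hy0 hne
    rw [LinearIndependent.pair_iff' hx0]
    intro a hay
    have ha : a ≠ 0 := by rintro rfl; simp at hay; exact hy0 hay.symm
    refine hne ?_
    rw [← hay, span_singleton_ksmul a ha x]
  constructor
  · -- cardinality
    obtain ⟨b⟩ : Nonempty (Basis (Fin 2) K W) := ⟨finBasisOfFinrankEq K W hW⟩
    set x : V := (b 0 : V) with hxdef
    set y : V := (b 1 : V) with hydef
    have hx : x ∈ W := (b 0).2
    have hy : y ∈ W := (b 1).2
    have hxyK : LinearIndependent K ![x, y] := by
      have h1 := b.linearIndependent.map' W.subtype (Submodule.ker_subtype W)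
      have h2 : (W.subtype ∘ b) = ![x, y] := by
        funext i; fin_cases i <;> rfl
      rwa [h2] at h1
    obtain ⟨hWxy, hLxy⟩ := key x y hx hy hxyK
    have hLpair := LinearIndependent.pair_iff.mp hLxy
    have hx0 : x ≠ 0 := hxyK.ne_zero 0
    have hy0 : y ≠ 0 := hxyK.ne_zero 1
    set F : Option K → Submodule L V := fun o =>
      match o with
      | none => Submodule.span L {y}
      | some a => Submodule.span L {x + a • y} with hF
    have hmemW : ∀ a : K, x + a • y ∈ W := fun a =>
      W.add_mem hx (W.smul_mem a hy)
    have hne0 : ∀ a : K, x + a • y ≠ (0 : V) := by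
      intro a h
      have := (LinearIndependent.pair_iff.mp hxyK 1 a (by rw [one_smul]; exact h)).1
      exact one_ne_zero this
    have hFinj : Function.Injective F := by
      intro o o' h
      match o, o' with
      | none, none => rfl
      | none, some a =>
        exfalso
        have h' : Submodule.span L {y} = Submodule.span L {x + a • y} := h
        have hmem : x + a • y ∈ Submodule.span L {y} := by
          rw [h']; exact Submodule.mem_span_singleton_self _
        obtain ⟨μ, hμ⟩ := Submodule.mem_span_singleton.mp hmem
        have h2 : (0 : L) • x + μ • y = (1 : L) • x + algebraMap K L a • y := by
          rw [zero_smul, zero_add, one_smul, algebraMap_smul]; exact hμ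
        have := (hLpair _ _ (pair_sub_eq_zero h2)).1
        simp at this
      | some a, none =>
        exfalso
        have h' : Submodule.span L {y} = Submodule.span L {x + a • y} := h.symm
        have hmem : x + a • y ∈ Submodule.span L {y} := by
          rw [h']; exact Submodule.mem_span_singleton_self _
        obtain ⟨μ, hμ⟩ := Submodule.mem_span_singleton.mp hmem
        have h2 : (0 : L) • x + μ • y = (1 : L) • x + algebraMap K L a • y := by
          rw [zero_smul, zero_add, one_smul, algebraMap_smul]; exact hμ
        have := (hLpair _ _ (pair_sub_eq_zero h2)).1
        simp at this
      | some a, some a' =>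
        congr 1
        have h' : Submodule.span L {x + a • y} = Submodule.span L {x + a' • y} := h
        have hmem : x + a' • y ∈ Submodule.span L {x + a • y} := by
          rw [h']; exact Submodule.mem_span_singleton_self _
        obtain ⟨μ, hμ⟩ := Submodule.mem_span_singleton.mp hmem
        have h2 : μ • x + (μ * algebraMap K L a) • y
            = (1 : L) • x + algebraMap K L a' • y := by
          rw [one_smul, mul_smul, algebraMap_smul L a y, algebraMap_smul L a' y,
            ← smul_add]
          exact hμ
        obtain ⟨hc1, hc2⟩ := hLpair _ _ (pair_sub_eq_zero h2)
        have hμ1 : μ = 1 := by linear_combination hc1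
        apply halg
        rw [hμ1, one_mul] at hc2
        linear_combination hc2
    have hFrange : Set.range F = {P | ∃ w ∈ W, w ≠ 0 ∧ P = Submodule.span L {w}} := by
      ext P
      constructor
      · rintro ⟨o, rfl⟩
        match o with
        | none => exact ⟨y, hy, hy0, rfl⟩
        | some a => exact ⟨x + a • y, hmemW a, hne0 a, rfl⟩
      · rintro ⟨w, hwW, hw0, rfl⟩
        have hw' : w ∈ Submodule.span K ({x, y} : Set V) := by rw [← hWxy]; exact hwW
        obtain ⟨c, d, hcd⟩ := Submodule.mem_span_pair.mp hw'
        by_cases hc : c = 0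
        · refine ⟨none, ?_⟩
          have hd0 : d ≠ 0 := by
            rintro rfl; rw [hc] at hcd; simp at hcd; exact hw0 hcd.symm
          have hwd : w = d • y := by rw [← hcd, hc]; simp
          show Submodule.span L {y} = _
          rw [hwd, span_singleton_ksmul d hd0]
        · refine ⟨some (c⁻¹ * d), ?_⟩
          show Submodule.span L {x + (c⁻¹ * d) • y} = _
          have hwc : w = c • (x + (c⁻¹ * d) • y) := by
            rw [smul_add, smul_smul, ← mul_assoc, mul_inv_cancel₀ hc, one_mul, hcd]
          rw [hwc, span_singleton_ksmul c hc]
    rw [← hFrange]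
    have hcardeq : Nat.card (Set.range F) = Nat.card (Option K) :=
      (Nat.card_congr (Equiv.ofInjective F hFinj)).symm
    rw [hcardeq, Nat.card_eq_fintype_card, Fintype.card_option, hq]
  refine ⟨?_, ?_, ?_⟩
  · -- dimension of members
    rintro P ⟨w, hwW, hw0, rfl⟩
    have e := (Submodule.restrictScalarsEquiv (S := K)
        (p := Submodule.span L ({w} : Set V))).restrictScalars K
    rw [e.finrank_eq]
    have h1 : finrank L (Submodule.span L ({w} : Set V)) = 1 := finrank_span_singleton hw0
    have h2 := Module.finrank_mul_finrank K L (Submodule.span L ({w} : Set V))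
    rw [hd, h1, mul_one] at h2
    exact h2.symm
  · -- pairwise disjoint
    rintro P₁ ⟨w₁, hw₁W, hw₁0, rfl⟩ P₂ ⟨w₂, hw₂W, hw₂0, rfl⟩ hne
    rw [eq_bot_iff]
    intro z hz
    rcases Submodule.mem_inf.mp hz with ⟨hz1, hz2⟩
    rw [Submodule.restrictScalars_mem] at hz1 hz2
    rw [Submodule.mem_bot]
    by_contra hz0
    obtain ⟨μ₁, hμ₁⟩ := Submodule.mem_span_singleton.mp hz1
    obtain ⟨μ₂, hμ₂⟩ := Submodule.mem_span_singleton.mp hz2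
    have hμ₁0 : μ₁ ≠ 0 := by rintro rfl; rw [← hμ₁] at hz0; simp at hz0
    have hμ₂0 : μ₂ ≠ 0 := by rintro rfl; rw [← hμ₂] at hz0; simp at hz0
    refine hne ?_
    rw [← span_singleton_lsmul μ₁ hμ₁0 w₁, ← span_singleton_lsmul μ₂ hμ₂0 w₂, hμ₁, hμ₂]
  · -- regulus property
    rintro M hM2 ⟨P₁, hP₁, P₂, hP₂, P₃, hP₃, h12, h13, h23, hMP₁, hMP₂, hMP₃⟩
    obtain ⟨w₁, hw₁W, hw₁0, rfl⟩ := hP₁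
    obtain ⟨w₂, hw₂W, hw₂0, rfl⟩ := hP₂
    obtain ⟨w₃, hw₃W, hw₃0, rfl⟩ := hP₃
    obtain ⟨m₁, hm₁, hm₁0⟩ := (Submodule.ne_bot_iff _).mp hMP₁
    obtain ⟨m₂, hm₂, hm₂0⟩ := (Submodule.ne_bot_iff _).mp hMP₂
    obtain ⟨m₃, hm₃, hm₃0⟩ := (Submodule.ne_bot_iff _).mp hMP₃
    rcases Submodule.mem_inf.mp hm₁ with ⟨hm₁M, hm₁P⟩
    rcases Submodule.mem_inf.mp hm₂ with ⟨hm₂M, hm₂P⟩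
    rcases Submodule.mem_inf.mp hm₃ with ⟨hm₃M, hm₃P⟩
    rw [Submodule.restrictScalars_mem] at hm₁P hm₂P hm₃P
    obtain ⟨l₁, hl₁⟩ := Submodule.mem_span_singleton.mp hm₁P
    obtain ⟨l₂, hl₂⟩ := Submodule.mem_span_singleton.mp hm₂P
    obtain ⟨l₃, hl₃⟩ := Submodule.mem_span_singleton.mp hm₃P
    have hl₁0 : l₁ ≠ 0 := by rintro rfl; rw [← hl₁] at hm₁0; simp at hm₁0
    have hl₂0 : l₂ ≠ 0 := by rintro rfl; rw [← hl₂] at hm₂0; simp at hm₂0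
    have hl₃0 : l₃ ≠ 0 := by rintro rfl; rw [← hl₃] at hm₃0; simp at hm₃0
    have hw12K : LinearIndependent K ![w₁, w₂] := indep_of_ne w₁ w₂ hw₁0 hw₂0 h12
    obtain ⟨hW12, hL12⟩ := key w₁ w₂ hw₁W hw₂W hw12K
    have hLpair := LinearIndependent.pair_iff.mp hL12
    have hw₃' : w₃ ∈ Submodule.span K ({w₁, w₂} : Set V) := by rw [← hW12]; exact hw₃W
    obtain ⟨γ, δ, hγδ⟩ := Submodule.mem_span_pair.mp hw₃'
    have hγ0 : γ ≠ 0 := by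
      rintro rfl
      have hδ0 : δ ≠ 0 := by
        rintro rfl; simp at hγδ; exact hw₃0 hγδ.symm
      refine h23 ?_
      have hspan : Submodule.span L {w₃} = Submodule.span L {w₂} := by
        rw [← hγδ]; simp only [zero_smul, zero_add]
        exact span_singleton_ksmul δ hδ0 w₂
      exact hspan.symm
    have hδ0 : δ ≠ 0 := by
      rintro rfl
      refine h13 ?_
      have hspan : Submodule.span L {w₃} = Submodule.span L {w₁} := by
        rw [← hγδ]; simp only [zero_smul, add_zero]
        exact span_singleton_ksmul γ hγ0 w₁
      exact hspan.symm
    have hm12K : LinearIndependent K ![m₁, m₂] := by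
      rw [LinearIndependent.pair_iff' hm₁0]
      intro a hay
      have ha0 : a ≠ 0 := by rintro rfl; simp at hay; exact hm₂0 hay.symm
      have hmem : m₂ ∈ Submodule.span L {w₁} := by
        rw [← hay, ← algebraMap_smul L a m₁]
        exact Submodule.smul_mem _ _ hm₁P
      obtain ⟨μ, hμ⟩ := Submodule.mem_span_singleton.mp hmem
      have hμ0 : μ ≠ 0 := by rintro rfl; rw [← hμ] at hm₂0; simp at hm₂0
      refine h12 ?_
      rw [← span_singleton_lsmul μ hμ0 w₁, hμ, ← hl₂, span_singleton_lsmul l₂ hl₂0 w₂]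
    have hMeq : M = Submodule.span K {m₁, m₂} := by
      have hrange : Set.range ![m₁, m₂] = {m₁, m₂} := by
        ext z; simp [Fin.exists_fin_two]; tauto
      have hle : Submodule.span K ({m₁, m₂} : Set V) ≤ M := by
        rw [Submodule.span_le]; rintro z hz
        rcases hz with rfl | hz
        · exact hm₁M
        · rcases hz with rfl; exact hm₂M
      have hfr : finrank K (Submodule.span K ({m₁, m₂} : Set V)) = 2 := by
        rw [← hrange, finrank_span_eq_card hm12K]; simp
      exact (Submodule.eq_of_le_of_finrank_le hle (by rw [hfr, hM2])).symm
    have hm₃' : m₃ ∈ Submodule.span K ({m₁, m₂} : Set V) := by rw [← hMeq]; exact hm₃M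
    obtain ⟨α, β, hαβ⟩ := Submodule.mem_span_pair.mp hm₃'
    -- the fundamental relation
    have h1 : (l₃ * algebraMap K L γ) • w₁ + (l₃ * algebraMap K L δ) • w₂
        = (algebraMap K L α * l₁) • w₁ + (algebraMap K L β * l₂) • w₂ := by
      have e1 : l₃ • w₃ = (l₃ * algebraMap K L γ) • w₁ + (l₃ * algebraMap K L δ) • w₂ := by
        rw [mul_smul, mul_smul, algebraMap_smul, algebraMap_smul, ← smul_add, hγδ]
      have e2 : l₃ • w₃ = (algebraMap K L α * l₁) • w₁ + (algebraMap K L β * l₂) • w₂ := by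
        rw [mul_smul, mul_smul, algebraMap_smul L α, algebraMap_smul L β, hl₁, hl₂, hαβ,
          hl₃]
      rw [← e1, ← e2]
    obtain ⟨hc1, hc2⟩ := hLpair _ _ (pair_sub_eq_zero h1)
    have hα0 : α ≠ 0 := by
      rintro rfl
      rw [map_zero, zero_mul, sub_zero] at hc1
      rcases mul_eq_zero.mp hc1 with h | h
      · exact hl₃0 h
      · exact hγ0 (halg (by rw [h, map_zero]))
    have hβ0 : β ≠ 0 := by
      rintro rfl
      rw [map_zero, zero_mul, sub_zero] at hc2
      rcases mul_eq_zero.mp hc2 with h | h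
      · exact hl₃0 h
      · exact hδ0 (halg (by rw [h, map_zero]))
    have hA0 : algebraMap K L α ≠ 0 := fun h => hα0 (halg (by rw [h, map_zero]))
    have hB0 : algebraMap K L β ≠ 0 := fun h => hβ0 (halg (by rw [h, map_zero]))
    have hl₁eq : l₁ = l₃ * algebraMap K L (γ * α⁻¹) := by
      rw [map_mul, map_inv₀]
      field_simp
      linear_combination -hc1
    have hl₂eq : l₂ = l₃ * algebraMap K L (δ * β⁻¹) := by
      rw [map_mul, map_inv₀]
      field_simp
      linear_combination -hc2
    set a : K := γ * α⁻¹ with hadef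
    set c : K := δ * β⁻¹ with hcdef
    have ha0 : a ≠ 0 := mul_ne_zero hγ0 (inv_ne_zero hα0)
    have hc0 : c ≠ 0 := mul_ne_zero hδ0 (inv_ne_zero hβ0)
    have hm₁eq : m₁ = l₃ • (a • w₁) := by
      rw [← hl₁, hl₁eq, mul_smul, algebraMap_smul]
    have hm₂eq : m₂ = l₃ • (c • w₂) := by
      rw [← hl₂, hl₂eq, mul_smul, algebraMap_smul]
    have hw12K' : LinearIndependent K ![a • w₁, c • w₂] := by
      have h := hw12K.units_smul ![Units.mk0 a ha0, Units.mk0 c hc0]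
      have heq : (![Units.mk0 a ha0, Units.mk0 c hc0] • ![w₁, w₂]) = ![a • w₁, c • w₂] := by
        funext i; fin_cases i <;> simp [Pi.smul_apply']
      rwa [heq] at h
    obtain ⟨hWeq', _⟩ := key (a • w₁) (c • w₂) (W.smul_mem a hw₁W) (W.smul_mem c hw₂W) hw12K'
    rintro P ⟨w, hwW, hw0, rfl⟩
    rw [Submodule.ne_bot_iff]
    have hw' : w ∈ Submodule.span K ({a • w₁, c • w₂} : Set V) := by
      rw [← hWeq']; exact hwW
    obtain ⟨e, f, hef⟩ := Submodule.mem_span_pair.mp hw'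
    refine ⟨l₃ • w, Submodule.mem_inf.mpr ⟨?_, ?_⟩, ?_⟩
    · rw [hMeq]
      have hcomb : l₃ • w = e • m₁ + f • m₂ := by
        rw [hm₁eq, hm₂eq, ← hef, smul_add, smul_comm e l₃, smul_comm f l₃]
      rw [hcomb]
      exact Submodule.add_mem _
        (Submodule.smul_mem _ _ (Submodule.subset_span (by simp)))
        (Submodule.smul_mem _ _ (Submodule.subset_span (by simp)))
    · rw [Submodule.restrictScalars_mem]
      exact Submodule.smul_mem _ _ (Submodule.mem_span_singleton_self w)
    · exact smul_ne_zero hl₃0 hw0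
end

section
/- Let V be a finite-dimensional F_q-vector space of dimension n with a nondegenerate bilinear form, and for a subspace U let U^⊥ denote its orthogonal complement. Let Σ and χ be subspaces with χ ⊆ Σ, dim Σ = st+t, dim χ = st, where n = st+s+t+1. Then Σ^⊥ ⊆ χ^⊥, dim Σ^⊥ = s+1, dim χ^⊥ = s+t+1. Moreover, for any (s+1)-dimensional subspace P with P ∩ Σ = {0}: dim(P^⊥ ∩ χ^⊥) = t and (P^⊥ ∩ χ^⊥) ∩ Σ^⊥ = {0}. -/
open Module LinearMap

section Aux

variable {F V : Type*} [Field F] [AddCommGroup V] [Module F V] [FiniteDimensional F V]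

/-- Dimension formula for orthogonal complements w.r.t. a nondegenerate bilinear form
(no reflexivity needed). -/
lemma aux_finrank_orthogonal (B : LinearMap.BilinForm F V) (hB : B.Nondegenerate)
    (W : Submodule F V) :
    finrank F (B.orthogonal W) + finrank F W = finrank F V := by
  have he : B.orthogonal W
      = W.dualAnnihilator.comap (B.flip.toDual hB.flip).toLinearMap := by
    ext x
    simp only [LinearMap.BilinForm.mem_orthogonal_iff, Submodule.mem_comap,
      Submodule.mem_dualAnnihilator]
    exact ⟨fun h w hw => h w hw, fun h w hw => h w hw⟩
  rw [he, Submodule.comap_equiv_eq_map_symm, LinearEquiv.finrank_map_eq,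
    ← (Subspace.quotEquivAnnihilator W).finrank_eq,
    Submodule.finrank_quotient_add_finrank]

lemma aux_orthogonal_sup (B : LinearMap.BilinForm F V) (W₁ W₂ : Submodule F V) :
    B.orthogonal (W₁ ⊔ W₂) = B.orthogonal W₁ ⊓ B.orthogonal W₂ := by
  refine le_antisymm (le_inf (B.orthogonal_le le_sup_left) (B.orthogonal_le le_sup_right)) ?_
  intro x hx n hn
  obtain ⟨a, ha, b, hb, rfl⟩ := Submodule.mem_sup.mp hn
  have h1 : B a x = 0 := hx.1 a ha
  have h2 : B b x = 0 := hx.2 b hb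
  simp [LinearMap.BilinForm.IsOrtho, h1, h2]

lemma aux_orthogonal_top (B : LinearMap.BilinForm F V) (hB : B.Nondegenerate) :
    B.orthogonal ⊤ = ⊥ := by
  rw [eq_bot_iff]
  intro x hx
  have : ∀ n : V, B.flip x n = 0 := fun n => hx n trivial
  exact (Submodule.mem_bot F).mpr (hB.flip.1 x fun n => this n)

end Aux

/-- Duality via orthogonal complements: with n = st+s+t+1, χ ⊆ Σ of dimensions st and
st+t, we have Σ^⊥ ⊆ χ^⊥ with dim Σ^⊥ = s+1 and dim χ^⊥ = s+t+1, and for every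
(s+1)-dimensional subspace P disjoint from Σ, the space P^⊥ ∩ χ^⊥ has dimension t and
is disjoint from Σ^⊥. -/
theorem stmt_15 {q s t n : ℕ} {F V : Type*} [Field F] [Fintype F] (hq : Fintype.card F = q)
    [AddCommGroup V] [Module F V] [FiniteDimensional F V]
    (hn : n = s * t + s + t + 1) (hV : finrank F V = n)
    (B : LinearMap.BilinForm F V) (hB : B.Nondegenerate)
    (Sig χ : Submodule F V) (hsub : χ ≤ Sig)
    (hSig : finrank F Sig = s * t + t) (hχ : finrank F χ = s * t) :
    B.orthogonal Sig ≤ B.orthogonal χ ∧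
    finrank F (B.orthogonal Sig) = s + 1 ∧
    finrank F (B.orthogonal χ) = s + t + 1 ∧
    ∀ P : Submodule F V, finrank F P = s + 1 → P ⊓ Sig = ⊥ →
      finrank F (B.orthogonal P ⊓ B.orthogonal χ : Submodule F V) = t ∧
      (B.orthogonal P ⊓ B.orthogonal χ) ⊓ B.orthogonal Sig = ⊥ := by
  have hdSig := aux_finrank_orthogonal B hB Sig
  have hdχ := aux_finrank_orthogonal B hB χ
  rw [hSig, hV, hn] at hdSig
  rw [hχ, hV, hn] at hdχ
  refine ⟨B.orthogonal_le hsub, by omega, by omega, fun P hP hPSig => ?_⟩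
  -- P ⊓ χ = ⊥
  have hPχ : P ⊓ χ = ⊥ := by
    rw [eq_bot_iff, ← hPSig]
    exact inf_le_inf_left P hsub
  have hsup : finrank F (P ⊔ χ : Submodule F V) = s + 1 + s * t := by
    have := Submodule.finrank_sup_add_finrank_inf_eq P χ
    rw [hPχ, hP, hχ, finrank_bot, add_zero] at this
    omega
  have hd := aux_finrank_orthogonal B hB (P ⊔ χ)
  rw [hsup, hV, hn, aux_orthogonal_sup] at hd
  refine ⟨by omega, ?_⟩
  -- P ⊔ Sig = ⊤
  have hPS : P ⊔ Sig = ⊤ := by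
    apply Submodule.eq_top_of_finrank_eq
    have := Submodule.finrank_sup_add_finrank_inf_eq P Sig
    rw [hPSig, hP, hSig, finrank_bot, add_zero] at this
    rw [hV, hn]
    omega
  have : (B.orthogonal P ⊓ B.orthogonal χ) ⊓ B.orthogonal Sig
      = B.orthogonal ((P ⊔ χ) ⊔ Sig) := by
    rw [aux_orthogonal_sup, aux_orthogonal_sup]
  rw [this]
  have htop : (P ⊔ χ) ⊔ Sig = ⊤ := by
    rw [eq_top_iff, ← hPS]
    exact sup_le (le_trans le_sup_left le_sup_left) le_sup_right
  rw [htop, aux_orthogonal_top B hB]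
end

section
/- Let V be an (s+t+1)-dimensional F_q-vector space, π an (s+1)-dimensional subspace, and S a family of t-dimensional subspaces each disjoint from π, such that any two distinct members of S intersect in a (t-1)-dimensional subspace, and such that the members of S do not all contain a common (t-1)-dimensional subspace. Then all members of S are contained in a common (t+1)-dimensional subspace, and this subspace meets π in a 1-dimensional subspace. -/
open Module

/-- Any finite-dimensional submodule contains a submodule of any smaller finrank. -/
lemma aux_exists_le_finrank_eq {F V : Type*} [Field F] [AddCommGroup V] [Module F V]
    [FiniteDimensional F V] (A : Submodule F V) (k : ℕ) (hk : k ≤ finrank F A) :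
    ∃ W : Submodule F V, W ≤ A ∧ finrank F W = k := by
  obtain ⟨f, hf⟩ := exists_linearIndependent_of_le_finrank (R := F) (M := A) hk
  have hg : LinearIndependent F (A.subtype ∘ f) := hf.map' A.subtype A.ker_subtype
  refine ⟨Submodule.span F (Set.range (A.subtype ∘ f)), ?_, ?_⟩
  · rw [Submodule.span_le]
    rintro x ⟨i, rfl⟩
    exact (f i).2
  · rw [finrank_span_eq_card hg, Fintype.card_fin]

/-- Two distinct codimension-one subspaces of D span D. -/
lemma aux_sup_of_hyperplanes {F V : Type*} [Field F] [AddCommGroup V] [Module F V]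
    [FiniteDimensional F V] {X Y D : Submodule F V} {n : ℕ}
    (hX : X ≤ D) (hY : Y ≤ D) (hXr : finrank F X = n) (hYr : finrank F Y = n)
    (hD : finrank F D = n + 1) (hne : X ≠ Y) : X ⊔ Y = D := by
  have hlt : X < X ⊔ Y := by
    refine lt_of_le_of_ne le_sup_left fun h => hne ?_
    have hYX : Y ≤ X := h ▸ le_sup_right
    exact (Submodule.eq_of_le_of_finrank_le hYX (by omega)).symm
  have h1 : finrank F X < finrank F (X ⊔ Y : Submodule F V) := Submodule.finrank_lt_finrank_of_lt hlt
  exact Submodule.eq_of_le_of_finrank_le (sup_le hX hY)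
    (by rw [hD]; omega)

/-- Erdős–Ko–Rado-type conclusion: a family of t-dimensional subspaces disjoint from π,
pairwise intersecting in dimension t-1, with no common (t-1)-dimensional subspace, lies
in a common (t+1)-dimensional subspace meeting π in a 1-dimensional subspace. -/
theorem stmt_18 {q s t : ℕ} {F V : Type*} [Field F] [Fintype F] (hq : Fintype.card F = q)
    [AddCommGroup V] [Module F V] [FiniteDimensional F V]
    (hV : finrank F V = s + t + 1)
    (π : Submodule F V) (hπ : finrank F π = s + 1)
    (S : Set (Submodule F V))
    (hdim : ∀ τ ∈ S, finrank F τ = t)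
    (hdisj : ∀ τ ∈ S, τ ⊓ π = ⊥)
    (hpair : ∀ τ₁ ∈ S, ∀ τ₂ ∈ S, τ₁ ≠ τ₂ →
      finrank F (τ₁ ⊓ τ₂ : Submodule F V) = t - 1)
    (hnocommon : ¬ ∃ W : Submodule F V, finrank F W = t - 1 ∧ ∀ τ ∈ S, W ≤ τ) :
    ∃ M : Submodule F V, finrank F M = t + 1 ∧ (∀ τ ∈ S, τ ≤ M) ∧
      finrank F (M ⊓ π : Submodule F V) = 1 := by
  -- t ≥ 1, else W = ⊥ contradicts hnocommon
  rcases Nat.eq_zero_or_pos t with ht0 | ht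
  · exact absurd ⟨⊥, by simp [ht0], fun τ _ => bot_le⟩ hnocommon
  -- S has two distinct elements
  obtain ⟨A, hAS, B, hBS, hAB⟩ : ∃ A ∈ S, ∃ B ∈ S, A ≠ B := by
    by_contra h
    push_neg at h
    rcases Set.eq_empty_or_nonempty S with hS | ⟨A, hAS⟩
    · obtain ⟨W, _, hW⟩ := aux_exists_le_finrank_eq (⊤ : Submodule F V) (t - 1)
        (by rw [finrank_top]; omega)
      exact hnocommon ⟨W, hW, fun τ hτ => by rw [hS] at hτ; exact hτ.elim⟩
    · obtain ⟨W, hWA, hW⟩ := aux_exists_le_finrank_eq A (t - 1)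
        (by rw [hdim A hAS]; omega)
      exact hnocommon ⟨W, hW, fun τ hτ => (h A hAS τ hτ) ▸ hWA⟩
  have hABr : finrank F (A ⊓ B : Submodule F V) = t - 1 := hpair A hAS B hBS hAB
  -- there is C ∈ S not containing A ⊓ B
  obtain ⟨C, hCS, hC⟩ : ∃ C ∈ S, ¬ (A ⊓ B ≤ C) := by
    by_contra h
    push_neg at h
    exact hnocommon ⟨A ⊓ B, hABr, h⟩
  have hCA : C ≠ A := fun h => hC (h ▸ inf_le_left)
  have hCB : C ≠ B := fun h => hC (h ▸ inf_le_right)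
  set M := A ⊔ B with hM
  have hMr : finrank F M = t + 1 := by
    rw [hM]
    have := Submodule.finrank_sup_add_finrank_inf_eq A B
    rw [hABr, hdim A hAS, hdim B hBS] at this
    omega
  -- key: every member of S is ≤ M
  have hle : ∀ τ ∈ S, τ ≤ M := by
    -- first C ≤ M
    have hCM : C ≤ M := by
      have h1 : finrank F (C ⊓ A : Submodule F V) = t - 1 := hpair C hCS A hAS hCA
      have h2 : finrank F (C ⊓ B : Submodule F V) = t - 1 := hpair C hCS B hBS hCB
      have hne : (C ⊓ A : Submodule F V) ≠ C ⊓ B := by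
        intro h
        apply hC
        have hle1 : (C ⊓ A : Submodule F V) ≤ A ⊓ B :=
          le_inf inf_le_right (h ▸ inf_le_right)
        have := Submodule.eq_of_le_of_finrank_le hle1 (by rw [h1, hABr])
        exact this ▸ inf_le_left
      have := aux_sup_of_hyperplanes (inf_le_left : C ⊓ A ≤ C)
        (inf_le_left : C ⊓ B ≤ C) h1 h2 (by rw [hdim C hCS]; omega) hne
      rw [← this]
      exact sup_le (le_trans inf_le_right le_sup_left) (le_trans inf_le_right le_sup_right)
    intro D hDS
    by_cases hDA : D = A
    · exact hDA ▸ le_sup_left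
    by_cases hDB : D = B
    · exact hDB ▸ le_sup_right
    have h1 : finrank F (D ⊓ A : Submodule F V) = t - 1 := hpair D hDS A hAS hDA
    have h2 : finrank F (D ⊓ B : Submodule F V) = t - 1 := hpair D hDS B hBS hDB
    by_cases hne : (D ⊓ A : Submodule F V) = D ⊓ B
    · -- then A ⊓ B ≤ D, use C
      have hABD : A ⊓ B ≤ D := by
        have hle1 : (D ⊓ A : Submodule F V) ≤ A ⊓ B :=
          le_inf inf_le_right (hne ▸ inf_le_right)
        have := Submodule.eq_of_le_of_finrank_le hle1 (by rw [h1, hABr])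
        exact this ▸ inf_le_left
      have hDC : D ≠ C := fun h => hC (h ▸ hABD)
      have h3 : finrank F (D ⊓ C : Submodule F V) = t - 1 := hpair D hDS C hCS hDC
      have hne2 : (A ⊓ B : Submodule F V) ≠ D ⊓ C := by
        intro h
        exact hC (h ▸ (inf_le_right : (D ⊓ C : Submodule F V) ≤ C))
      have hsup := aux_sup_of_hyperplanes hABD (inf_le_left : D ⊓ C ≤ D)
        hABr h3 (by rw [hdim D hDS]; omega) hne2
      rw [← hsup]
      exact sup_le (le_trans inf_le_left le_sup_left)
        (le_trans inf_le_right hCM)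
    · have hsup := aux_sup_of_hyperplanes (inf_le_left : D ⊓ A ≤ D)
        (inf_le_left : D ⊓ B ≤ D) h1 h2 (by rw [hdim D hDS]; omega) hne
      rw [← hsup]
      exact sup_le (le_trans inf_le_right le_sup_left) (le_trans inf_le_right le_sup_right)
  refine ⟨M, hMr, hle, ?_⟩
  -- dim (M ⊓ π) ≥ 1 by Grassmann, ≤ 1 since A ⊓ π = ⊥ and A has codim 1 in M
  have hgr := Submodule.finrank_sup_add_finrank_inf_eq M π
  have hub : finrank F (M ⊔ π : Submodule F V) ≤ s + t + 1 := hV ▸ Submodule.finrank_le _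
  have hlow : 1 ≤ finrank F (M ⊓ π : Submodule F V) := by
    rw [hMr, hπ] at hgr; omega
  have hgr2 := Submodule.finrank_sup_add_finrank_inf_eq A (M ⊓ π)
  have hinf : (A ⊓ (M ⊓ π) : Submodule F V) = ⊥ := by
    rw [← hdisj A hAS]
    exact le_antisymm (le_inf inf_le_left (le_trans inf_le_right inf_le_right))
      (le_inf inf_le_left (le_inf (le_trans inf_le_left le_sup_left) inf_le_right))
  have hub2 : finrank F (A ⊔ (M ⊓ π) : Submodule F V) ≤ t + 1 := by
    rw [← hMr]
    exact Submodule.finrank_mono (sup_le le_sup_left inf_le_left)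
  rw [hinf, finrank_bot, hdim A hAS] at hgr2
  omega
end

section
/- Let V be a finite-dimensional vector space over a field and let S be a family of t-dimensional subspaces such that any two distinct members intersect in a subspace of dimension exactly t-1. Then either all members of S are contained in a common (t+1)-dimensional subspace, or all members of S contain a common (t-1)-dimensional subspace. -/
open Module

/-- Any submodule of finite rank contains a submodule of any smaller given rank. -/
lemma aux_exists_sub {F V : Type*} [Field F] [AddCommGroup V] [Module F V]
    [FiniteDimensional F V] (p : Submodule F V) {n : ℕ} (hn : n ≤ finrank F p) :
    ∃ W : Submodule F V, W ≤ p ∧ finrank F W = n := by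
  obtain ⟨f, hf⟩ := exists_linearIndependent_of_le_finrank (R := F) (M := p) hn
  refine ⟨(Submodule.span F (Set.range f)).map p.subtype, ?_, ?_⟩
  · exact Submodule.map_subtype_le _ _
  · rw [← LinearEquiv.finrank_eq
      (Submodule.equivMapOfInjective p.subtype p.injective_subtype
        (Submodule.span F (Set.range f))), finrank_span_eq_card hf]
    simp

/-- Classical dichotomy: a family of t-dimensional subspaces pairwise intersecting in
dimension exactly t-1 either lies in a common (t+1)-dimensional subspace or has a common
(t-1)-dimensional subspace. -/
theorem stmt_19 {t : ℕ} {F V : Type*} [Field F]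
    [AddCommGroup V] [Module F V] [FiniteDimensional F V]
    (S : Set (Submodule F V)) (hS : S.Nonempty)
    (hdim : ∀ τ ∈ S, finrank F τ = t)
    (hpair : ∀ τ₁ ∈ S, ∀ τ₂ ∈ S, τ₁ ≠ τ₂ →
      finrank F (τ₁ ⊓ τ₂ : Submodule F V) = t - 1) :
    (∃ M : Submodule F V, finrank F M = t + 1 ∧ ∀ τ ∈ S, τ ≤ M) ∨
    (∃ W : Submodule F V, finrank F W = t - 1 ∧ ∀ τ ∈ S, W ≤ τ) := by
  obtain ⟨τ₀, hτ₀⟩ := hS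
  rcases Nat.eq_zero_or_pos t with rfl | ht
  · right
    exact ⟨⊥, by simp, fun τ _ => bot_le⟩
  by_cases hsing : ∀ τ ∈ S, τ = τ₀
  · right
    obtain ⟨W, hWle, hWd⟩ := aux_exists_sub τ₀ (n := t - 1)
      (by rw [hdim τ₀ hτ₀]; omega)
    exact ⟨W, hWd, fun τ hτ => (hsing τ hτ) ▸ hWle⟩
  push_neg at hsing
  obtain ⟨τ₁, hτ₁, hne⟩ := hsing
  set W := τ₀ ⊓ τ₁ with hWdef
  set M := τ₀ ⊔ τ₁ with hMdef
  have hW : finrank F W = t - 1 := hpair τ₀ hτ₀ τ₁ hτ₁ (Ne.symm hne)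
  have hsum := Submodule.finrank_sup_add_finrank_inf_eq τ₀ τ₁
  have hM : finrank F M = t + 1 := by
    rw [hdim τ₀ hτ₀, hdim τ₁ hτ₁, ← hMdef, ← hWdef] at hsum
    omega
  -- key dichotomy for each member
  have key : ∀ τ ∈ S, τ ≤ M ∨ W ≤ τ := by
    intro τ hτ
    rcases eq_or_ne τ τ₀ with rfl | h0
    · exact Or.inr inf_le_left
    rcases eq_or_ne τ τ₁ with rfl | h1
    · exact Or.inr inf_le_right
    have hA : finrank F (τ ⊓ τ₀ : Submodule F V) = t - 1 := hpair τ hτ τ₀ hτ₀ h0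
    have hB : finrank F (τ ⊓ τ₁ : Submodule F V) = t - 1 := hpair τ hτ τ₁ hτ₁ h1
    rcases eq_or_ne (τ ⊓ τ₀) (τ ⊓ τ₁) with hAB | hAB
    · right
      have hle : τ ⊓ τ₀ ≤ W := le_inf inf_le_right (hAB ▸ inf_le_right)
      have : τ ⊓ τ₀ = W := Submodule.eq_of_le_of_finrank_le hle (by omega)
      exact this ▸ inf_le_left
    · left
      have hlt : (τ ⊓ τ₀ : Submodule F V) < (τ ⊓ τ₀) ⊔ (τ ⊓ τ₁) := by
        refine lt_of_le_of_ne le_sup_left fun h => hAB ?_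
        have hBle : τ ⊓ τ₁ ≤ τ ⊓ τ₀ := h ▸ le_sup_right
        exact (Submodule.eq_of_le_of_finrank_le hBle (by omega)).symm
      have hrk : t ≤ finrank F ((τ ⊓ τ₀) ⊔ (τ ⊓ τ₁) : Submodule F V) := by
        have := Submodule.finrank_lt_finrank_of_lt hlt
        omega
      have hsub : (τ ⊓ τ₀) ⊔ (τ ⊓ τ₁) ≤ τ := sup_le inf_le_left inf_le_left
      have heq : (τ ⊓ τ₀) ⊔ (τ ⊓ τ₁) = τ :=
        Submodule.eq_of_le_of_finrank_le hsub (by rw [hdim τ hτ]; omega)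
      calc τ = (τ ⊓ τ₀) ⊔ (τ ⊓ τ₁) := heq.symm
        _ ≤ τ₀ ⊔ τ₁ := sup_le_sup inf_le_right inf_le_right
  by_cases hall : ∀ τ ∈ S, τ ≤ M
  · left; exact ⟨M, hM, hall⟩
  push_neg at hall
  obtain ⟨τ₃, hτ₃S, hτ₃⟩ := hall
  right
  refine ⟨W, hW, fun τ hτ => ?_⟩
  rcases key τ hτ with hle | hW'
  · have hWτ₃ : W ≤ τ₃ := (key τ₃ hτ₃S).resolve_left hτ₃
    have hWM : W ≤ M := le_trans inf_le_left le_sup_left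
    have h1 : W ≤ τ₃ ⊓ M := le_inf hWτ₃ hWM
    have hlt3 : (τ₃ ⊓ M : Submodule F V) < τ₃ :=
      lt_of_le_of_ne inf_le_left (fun h => hτ₃ (by rw [← h]; exact inf_le_right))
    have hd3 : finrank F (τ₃ ⊓ M : Submodule F V) < t := by
      have := Submodule.finrank_lt_finrank_of_lt hlt3
      rw [hdim τ₃ hτ₃S] at this; exact this
    have hMeq : τ₃ ⊓ M = W :=
      (Submodule.eq_of_le_of_finrank_le h1 (by omega)).symm
    have hne3 : τ ≠ τ₃ := fun h => hτ₃ (h ▸ hle)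
    have hsub : τ ⊓ τ₃ ≤ W := by
      rw [← hMeq]; exact le_inf inf_le_right (le_trans inf_le_left hle)
    have hd : finrank F (τ ⊓ τ₃ : Submodule F V) = t - 1 := hpair τ hτ τ₃ hτ₃S hne3
    have : τ ⊓ τ₃ = W := Submodule.eq_of_le_of_finrank_le hsub (by omega)
    exact this ▸ inf_le_left
  · exact hW'
end
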